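/- Let M be a smooth manifold, A = C^∞(M), and D(M) the A-module of differential operators of order ≤ 1 on A. Every Lie-Rinehart algebra structure (D(M), ρ) on D(M) (with the commutator Lie bracket) is of the form ρ = ρ_α for a unique A-linear form α : D(M) → A satisfying δα = (δ1)∧α; specifically α(φ) = (ρ(φ) - φ)(1). -/

import Mathlib

open LinearMap

set_option linter.unusedSectionVars false
set_option linter.unusedVariables false

section Prelim

variable (K A : Type*) [Field K] [CharZero K] [CommRing A] [Algebra K A]

/-- A differential operator of order at most 1 on `A`. -/
def IsDiff1 (φ : A →ₗ[K] A) : Prop :=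
  ∀ a b : A, φ (a * b) = a * φ b + b * φ a - a * b * φ 1

variable {K A}

/-- The commutator bracket of two endomorphisms. -/
def opBracket (φ ψ : A →ₗ[K] A) : A →ₗ[K] A := φ ∘ₗ ψ - ψ ∘ₗ φ

theorem isDiff1_mulLeft (f : A) : IsDiff1 K A (LinearMap.mulLeft K f) := by
  intro a b; simp only [LinearMap.mulLeft_apply, mul_one]; ring

theorem IsDiff1.opBracket {φ ψ : A →ₗ[K] A} (hφ : IsDiff1 K A φ) (hψ : IsDiff1 K A ψ) :
    IsDiff1 K A (_root_.opBracket φ ψ) := by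
  intro a b
  simp only [_root_.opBracket, LinearMap.sub_apply, LinearMap.comp_apply]
  rw [hψ a b, hφ a b]
  simp only [map_add, map_sub]
  rw [hφ a (ψ b), hφ b (ψ a), hφ (a * b) (ψ 1), hψ a (φ b), hψ b (φ a), hψ (a * b) (φ 1),
    hφ a b, hψ a b]
  ring

variable (K A) in
/-- The `A`-module `Diff_K(A)` of differential operators of order at most 1 on `A`. -/
def Diff1 : Submodule A (A →ₗ[K] A) where
  carrier := {φ | IsDiff1 K A φ}
  add_mem' := by
    intro φ ψ hφ hψ a b
    simp only [LinearMap.add_apply, hφ a b, hψ a b]; ring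
  zero_mem' := by intro a b; simp
  smul_mem' := by
    intro c φ hφ a b
    simp only [LinearMap.smul_apply, smul_eq_mul, hφ a b]; ring

/-- The commutator bracket on `Diff1`. -/
def Diff1.bk (φ ψ : Diff1 K A) : Diff1 K A :=
  ⟨opBracket φ.1 ψ.1, IsDiff1.opBracket φ.2 ψ.2⟩

variable (K) in
/-- The multiplication operator by `f`, as a differential operator of order `≤ 1`. -/
def Diff1.const (f : A) : Diff1 K A := ⟨LinearMap.mulLeft K f, isDiff1_mulLeft f⟩

/-- Evaluation at the unit: the linear form `δ1 : φ ↦ φ(1)` on `Diff1`. -/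
def ev1 : Diff1 K A →ₗ[A] A where
  toFun φ := φ.1 1
  map_add' φ ψ := rfl
  map_smul' c φ := rfl

end Prelim

section Mfd

open scoped Manifold

local notation "∞" => (⊤ : ℕ∞)

variable {EM : Type*} [NormedAddCommGroup EM] [NormedSpace ℝ EM]
  {HM : Type*} [TopologicalSpace HM] {I : ModelWithCorners ℝ EM HM}
  {M : Type*} [TopologicalSpace M] [ChartedSpace HM M] [IsManifold I ∞ M]

set_option maxHeartbeats 1000000

theorem stmt4 (ρ : Diff1 ℝ C^∞⟮I, M; ℝ⟯ →ₗ[C^∞⟮I, M; ℝ⟯] Diff1 ℝ C^∞⟮I, M; ℝ⟯)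
    (hLie : ∀ φ ψ : Diff1 ℝ C^∞⟮I, M; ℝ⟯, ρ (Diff1.bk φ ψ) = Diff1.bk (ρ φ) (ρ ψ))
    (hLeibniz : ∀ (φ ψ : Diff1 ℝ C^∞⟮I, M; ℝ⟯) (a : C^∞⟮I, M; ℝ⟯),
      Diff1.bk φ (a • ψ) = ((ρ φ).1 a - a * (ρ φ).1 1) • ψ + a • Diff1.bk φ ψ) :
    ∃! α : Diff1 ℝ C^∞⟮I, M; ℝ⟯ →ₗ[C^∞⟮I, M; ℝ⟯] C^∞⟮I, M; ℝ⟯,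
      (∀ φ ψ : Diff1 ℝ C^∞⟮I, M; ℝ⟯,
        φ.1 (α ψ) - ψ.1 (α φ) - α (Diff1.bk φ ψ) = φ.1 1 * α ψ - ψ.1 1 * α φ) ∧
      (∀ φ : Diff1 ℝ C^∞⟮I, M; ℝ⟯, ((ρ φ : C^∞⟮I, M; ℝ⟯ →ₗ[ℝ] C^∞⟮I, M; ℝ⟯)) = (φ : C^∞⟮I, M; ℝ⟯ →ₗ[ℝ] C^∞⟮I, M; ℝ⟯) + LinearMap.mulLeft ℝ (α φ)) ∧
      (∀ φ : Diff1 ℝ C^∞⟮I, M; ℝ⟯, α φ = (ρ φ).1 1 - φ.1 1) := by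
  have key : ∀ (φ : Diff1 ℝ C^∞⟮I, M; ℝ⟯) (a : C^∞⟮I, M; ℝ⟯),
      (ρ φ).1 a = φ.1 a + ((ρ φ).1 1 - φ.1 1) * a := by
    intro φ a
    have h := congrArg (fun t => t.1 1) (hLeibniz φ (Diff1.const ℝ 1) a)
    simp only [Diff1.bk, _root_.opBracket, Diff1.const, Submodule.coe_smul,
      Submodule.coe_add, LinearMap.sub_apply, LinearMap.comp_apply,
      LinearMap.add_apply, LinearMap.smul_apply, LinearMap.mulLeft_apply,
      smul_eq_mul, one_mul, mul_one] at h
    linear_combination -h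
  set α : Diff1 ℝ C^∞⟮I, M; ℝ⟯ →ₗ[C^∞⟮I, M; ℝ⟯] C^∞⟮I, M; ℝ⟯ := (ev1 ∘ₗ ρ) - ev1 with hα
  have e1 : ∀ χ : Diff1 ℝ C^∞⟮I, M; ℝ⟯, α χ = (ρ χ).1 1 - χ.1 1 := fun _ => rfl
  refine ⟨α, ⟨?_, ?_, fun φ => e1 φ⟩, ?_⟩
  · intro φ ψ
    have hL := congrArg (fun t => t.1 1) (hLie φ ψ)
    simp only [Diff1.bk, _root_.opBracket, LinearMap.sub_apply,
      LinearMap.comp_apply] at hL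
    simp only [e1, Diff1.bk, _root_.opBracket, LinearMap.sub_apply, LinearMap.comp_apply]
    have k1 := key φ ((ρ ψ).1 1)
    have k2 := key ψ ((ρ φ).1 1)
    have m1 : φ.1 ((ρ ψ).1 1 - ψ.1 1) = φ.1 ((ρ ψ).1 1) - φ.1 (ψ.1 1) := map_sub _ _ _
    have m2 : ψ.1 ((ρ φ).1 1 - φ.1 1) = ψ.1 ((ρ φ).1 1) - ψ.1 (φ.1 1) := map_sub _ _ _
    linear_combination m1 - m2 - hL - k1 + k2
  · intro φ
    apply LinearMap.ext
    intro a
    simp only [LinearMap.add_apply, LinearMap.mulLeft_apply, e1]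
    rw [key φ a]
  · rintro α' ⟨-, -, h3⟩
    apply LinearMap.ext
    intro φ
    rw [h3 φ, e1]

end Mfd
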